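/- Fix integers n ≥ 1 and l ≥ 1, and for k ∈ ℤ let i_k be the unique element of {0,1,…,n} with i_k ≡ −k (mod n+1). There exists a constant C (depending only on n and l) such that for every M ≥ 1 and every pair (y, v) ∈ B_l × B_M with v_{n+1} ≥ v_b + C for all 1 ≤ b ≤ n, the following holds: defining y^(k) ⊗ v^(k) = ẽ^max_{i_k} ⋯ ẽ^max_{i_1}(y ⊗ v) in B_l ⊗ B_M for 0 ≤ k ≤ n (with ẽ^max_{i_1} applied first, and ẽ^max_i w = ẽ_i^{ε_i(w)} w computed with the tensor product operators), one has t(σ v^(n)) = t(y), where σ(x_1,…,x_{n+1}) = (x_2,…,x_{n+1},x_1) and t(x_1,…,x_{n+1}) = (x_n, x_{n−1},…,x_1). -/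

import Mathlib

/-- Iterated application of a partial map: `OptIter g m a` is `g^m a`. -/
def OptIter {α : Type} (g : α → Option α) : ℕ → α → Option α
  | 0, a => some a
  | m + 1, a => (g a).bind (OptIter g m)

/-- Apply the partial maps `g 1`, `g 2`, ..., `g m` in this order. -/
def ChainOpt {α : Type} (g : ℕ → α → Option α) (m : ℕ) (a : α) : Option α :=
  (List.range m).foldl (fun acc j => acc.bind (g (j + 1))) (some a)

/-- A set with partial Kashiwara-type operators indexed by `{0, 1, ..., n}`. -/
structure PreCrystal (n : ℕ) where
  carrier : Type
  e : Fin (n + 1) → carrier → Option carrier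
  f : Fin (n + 1) → carrier → Option carrier

namespace PreCrystal

variable {n : ℕ}

/-- `ε_i(b) = max {m ≥ 0 : ẽ_i^m b is defined}`. -/
noncomputable def eps (C : PreCrystal n) (i : Fin (n + 1)) (b : C.carrier) : ℕ :=
  sSup {m | OptIter (C.e i) m b ≠ none}

/-- `φ_i(b) = max {m ≥ 0 : f̃_i^m b is defined}`. -/
noncomputable def phi (C : PreCrystal n) (i : Fin (n + 1)) (b : C.carrier) : ℕ :=
  sSup {m | OptIter (C.f i) m b ≠ none}

/-- `ẽ_i^max b = ẽ_i^{ε_i(b)} b`. -/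
noncomputable def eMax (C : PreCrystal n) (i : Fin (n + 1)) (b : C.carrier) : Option C.carrier :=
  OptIter (C.e i) (C.eps i b) b

/-- The Weyl group operator `S_i`: `f̃_i^{φ_i(b)-ε_i(b)} b` if `φ_i(b) ≥ ε_i(b)`,
and `ẽ_i^{ε_i(b)-φ_i(b)} b` if `φ_i(b) ≤ ε_i(b)`. -/
noncomputable def S (C : PreCrystal n) (i : Fin (n + 1)) (b : C.carrier) : Option C.carrier :=
  if C.eps i b ≤ C.phi i b then OptIter (C.f i) (C.phi i b - C.eps i b) b
  else OptIter (C.e i) (C.eps i b - C.phi i b) b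

/-- The tensor product `C ⊗ D` of two crystals, with the Kashiwara tensor product rule. -/
noncomputable def tensor (C D : PreCrystal n) : PreCrystal n where
  carrier := C.carrier × D.carrier
  e := fun i p =>
    if D.eps i p.2 ≤ C.phi i p.1 then (C.e i p.1).map (fun b => (b, p.2))
    else (D.e i p.2).map (fun b => (p.1, b))
  f := fun i p =>
    if D.eps i p.2 < C.phi i p.1 then (C.f i p.1).map (fun b => (b, p.2))
    else (D.f i p.2).map (fun b => (p.1, b))

end PreCrystal

/-- Kashiwara raising operator `ẽ_i` of type `A_n^{(1)}` on `(n+1)`-tuples of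
nonnegative integers (zero-indexed: coordinate `j` is `x_{j+1}`): defined iff the
coordinate at index `i` is positive, it adds 1 at index `i-1` (cyclically) and
subtracts 1 at index `i`. -/
def eA (n : ℕ) (i : Fin (n + 1)) (x : Fin (n + 1) → ℕ) : Option (Fin (n + 1) → ℕ) :=
  if 0 < x i then
    some (Function.update (Function.update x (i - 1) (x (i - 1) + 1)) i (x i - 1))
  else none

/-- Kashiwara lowering operator `f̃_i` of type `A_n^{(1)}`: defined iff the coordinate
at index `i-1` is positive, it subtracts 1 at index `i-1` and adds 1 at index `i`. -/
def fA (n : ℕ) (i : Fin (n + 1)) (x : Fin (n + 1) → ℕ) : Option (Fin (n + 1) → ℕ) :=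
  if 0 < x (i - 1) then
    some (Function.update (Function.update x i (x i + 1)) (i - 1) (x (i - 1) - 1))
  else none

/-- The crystal operators of type `A_n^{(1)}` on all `(n+1)`-tuples; the crystal `B_l`
is the subset of tuples with coordinate sum `l`. -/
def BA (n : ℕ) : PreCrystal n where
  carrier := Fin (n + 1) → ℕ
  e := eA n
  f := fA n

/-- The unique element of `{0, ..., n}` congruent to `-k` modulo `n+1`. -/
def negIdx (n : ℕ) (k : ℤ) : Fin (n + 1) :=
  ⟨((-k) % ((n : ℤ) + 1)).toNat, by
    have h1 := Int.emod_nonneg (-k) (by omega : ((n : ℤ) + 1) ≠ 0)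
    have h2 := Int.emod_lt_of_pos (-k) (by omega : (0 : ℤ) < (n : ℤ) + 1)
    omega⟩

/-- The cyclic shift `σ : (x_1, ..., x_{n+1}) ↦ (x_2, ..., x_{n+1}, x_1)`. -/
def shiftA (n : ℕ) (x : Fin (n + 1) → ℕ) : Fin (n + 1) → ℕ := fun j => x (j + 1)

/-- The map `t(x_1, ..., x_{n+1}) = (x_n, x_{n-1}, ..., x_1)`. -/
def tA (n : ℕ) (x : Fin (n + 1) → ℕ) : Fin n → ℕ :=
  fun k => x ⟨n - 1 - (k : ℕ), by omega⟩

/-- The `(N+1)`-fold tensor power `B ⊗ ... ⊗ B`, associated to the left. -/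
noncomputable def BPow (n : ℕ) : ℕ → PreCrystal n
  | 0 => BA n
  | N + 1 => (BPow n N).tensor (BA n)

/-- The element `b_1 ⊗ ... ⊗ b_{N+1}` of the `(N+1)`-fold tensor power. -/
noncomputable def tensorOf (n : ℕ) : (N : ℕ) → (Fin (N + 1) → (Fin (n + 1) → ℕ)) → (BPow n N).carrier
  | 0, b => b 0
  | N + 1, b => (tensorOf n N (fun j => b j.castSucc), b (Fin.last (N + 1)))

/-- Membership in `B_{l_1} ⊗ ... ⊗ B_{l_{N+1}}`: each factor has coordinate sum `l_j`. -/
def memBPow (n : ℕ) : (N : ℕ) → (Fin (N + 1) → ℕ) → (BPow n N).carrier → Prop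
  | 0, l, x => ∑ j, x j = l 0
  | N + 1, l, p => memBPow n N (fun j => l j.castSucc) p.1 ∧ ∑ j, p.2 j = l (Fin.last (N + 1))

/-- The componentwise cyclic shift `σ_B = σ ⊗ ... ⊗ σ` on a tensor power. -/
noncomputable def shiftPow (n : ℕ) : (N : ℕ) → (BPow n N).carrier → (BPow n N).carrier
  | 0, x => shiftA n x
  | N + 1, p => (shiftPow n N p.1, shiftA n p.2)


theorem finval1 (n : ℕ) (hn : 1 ≤ n) : ((1 : Fin (n+1)) : ℕ) = 1 := by
  rw [Fin.val_one']; exact Nat.mod_eq_of_lt (by omega)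

theorem finsub1 (n c : ℕ) (hc : c < n + 1) (h1 : 1 ≤ c) (hn : 1 ≤ n) :
    (⟨c, hc⟩ : Fin (n+1)) - 1 = ⟨c - 1, by omega⟩ := by
  rw [Fin.sub_def]
  ext
  simp only [finval1 n hn]
  show (n + 1 - 1 + c) % (n+1) = c - 1
  have h2 : n + 1 - 1 + c = (n+1) + (c-1) := by omega
  rw [h2, Nat.add_mod_left, Nat.mod_eq_of_lt (by omega)]

theorem finadd1 (n c : ℕ) (hn : 1 ≤ n) (hc : c < n) :
    ((⟨c, by omega⟩ : Fin (n+1)) + 1 : Fin (n+1)) = ⟨c + 1, by omega⟩ := by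
  rw [Fin.add_def]
  ext
  simp only [finval1 n hn]
  show (c + 1) % (n+1) = c + 1
  exact Nat.mod_eq_of_lt (by omega)

theorem negIdx_eq (n k : ℕ) (h1 : 1 ≤ k) (h2 : k ≤ n) :
    negIdx n (k : ℤ) = ⟨n + 1 - k, by omega⟩ := by
  ext
  show ((-(k:ℤ)) % ((n : ℤ) + 1)).toNat = n + 1 - k
  have : (-(k:ℤ)) % ((n : ℤ) + 1) = ((n:ℤ) + 1 - k) % ((n:ℤ)+1) := by
    conv_lhs => rw [show (-(k:ℤ)) = ((n:ℤ)+1-(k:ℤ)) + ((n:ℤ)+1) * (-1) by ring]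
    rw [Int.add_mul_emod_self_left]
  rw [this, Int.emod_eq_of_lt (by omega) (by omega)]
  omega

theorem ChainOpt_succ {α : Type} (g : ℕ → α → Option α) (m : ℕ) (a : α) :
    ChainOpt g (m+1) a = (ChainOpt g m a).bind (g (m+1)) := by
  show (List.range (m+1)).foldl _ (some a) = _
  rw [List.range_succ, List.foldl_append]
  rfl
section Lemmas
variable {n : ℕ}

theorem OptIter_succ {α : Type} (g : α → Option α) (m : ℕ) (a : α) :
    OptIter g (m+1) a = (g a).bind (OptIter g m) := rfl

theorem OptIter_add {α : Type} (g : α → Option α) (m m' : ℕ) (a : α) :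
    OptIter g (m + m') a = (OptIter g m a).bind (OptIter g m') := by
  induction m generalizing a with
  | zero => simp [OptIter]
  | succ p ih =>
    have : p + 1 + m' = (p + m') + 1 := by omega
    rw [this]
    show (g a).bind (OptIter g (p+m')) = ((g a).bind (OptIter g p)).bind (OptIter g m')
    cases g a with
    | none => rfl
    | some b =>
      show OptIter g (p + m') b = (OptIter g p b).bind (OptIter g m')
      exact ih b

theorem OptIter_mono {α : Type} (g : α → Option α) {m m' : ℕ} (h : m ≤ m') (a : α)
    (hne : OptIter g m' a ≠ none) : OptIter g m a ≠ none := by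
  obtain ⟨r, rfl⟩ := Nat.exists_eq_add_of_le h
  rw [OptIter_add] at hne
  intro h0; rw [h0] at hne; exact hne rfl

/-- the result of one application of `ẽ_i` -/
def eAfun (n : ℕ) (i : Fin (n + 1)) (x : Fin (n + 1) → ℕ) : Fin (n + 1) → ℕ :=
  Function.update (Function.update x (i - 1) (x (i - 1) + 1)) i (x i - 1)

theorem eA_eq (i : Fin (n+1)) (x : Fin (n+1) → ℕ) :
    eA n i x = if 0 < x i then some (eAfun n i x) else none := rfl

theorem eAfun_self (i : Fin (n+1)) (x : Fin (n+1) → ℕ) : eAfun n i x i = x i - 1 := by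
  simp [eAfun]

theorem eAfun_pred (i : Fin (n+1)) (hne : i - 1 ≠ i) (x : Fin (n+1) → ℕ) :
    eAfun n i x (i - 1) = x (i - 1) + 1 := by
  simp [eAfun, Function.update_apply, hne]

theorem eAfun_other (i j : Fin (n+1)) (hj1 : j ≠ i) (hj2 : j ≠ i - 1) (x : Fin (n+1) → ℕ) :
    eAfun n i x j = x j := by
  simp [eAfun, Function.update_apply, hj1, hj2]

theorem OptIter_eA_ne (i : Fin (n+1)) (m : ℕ) (x : Fin (n+1) → ℕ) :
    OptIter (eA n i) m x ≠ none ↔ m ≤ x i := by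
  induction m generalizing x with
  | zero => simp [OptIter]
  | succ p ih =>
    rw [OptIter_succ, eA_eq]
    by_cases h : 0 < x i
    · rw [if_pos h]
      show OptIter (eA n i) p (eAfun n i x) ≠ none ↔ _
      rw [ih, eAfun_self]
      omega
    · rw [if_neg h]
      constructor
      · intro hc; exact absurd rfl hc
      · intro hle; exact absurd hle (by omega)

theorem OptIter_fA_ne (i : Fin (n+1)) (m : ℕ) (x : Fin (n+1) → ℕ) :
    OptIter (fA n i) m x ≠ none ↔ m ≤ x (i - 1) := by
  induction m generalizing x with
  | zero => simp [OptIter]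
  | succ p ih =>
    rw [OptIter_succ]
    show (if 0 < x (i-1) then some _ else none).bind _ ≠ none ↔ _
    by_cases h : 0 < x (i - 1)
    · rw [if_pos h]
      show OptIter (fA n i) p _ ≠ none ↔ _
      rw [ih]
      have : Function.update (Function.update x i (x i + 1)) (i - 1) (x (i - 1) - 1) (i - 1)
          = x (i - 1) - 1 := by simp
      rw [this]
      omega
    · rw [if_neg h]
      constructor
      · intro hc; exact absurd rfl hc
      · intro hle; exact absurd hle (by omega)

theorem eps_BA (i : Fin (n+1)) (x : Fin (n+1) → ℕ) : (BA n).eps i x = x i := by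
  have : {m | OptIter ((BA n).e i) m x ≠ none} = Set.Iic (x i) := by
    ext m; exact OptIter_eA_ne i m x
  show sSup {m | OptIter ((BA n).e i) m x ≠ none} = x i
  rw [this, csSup_Iic]

theorem phi_BA (i : Fin (n+1)) (x : Fin (n+1) → ℕ) : (BA n).phi i x = x (i - 1) := by
  have : {m | OptIter ((BA n).f i) m x ≠ none} = Set.Iic (x (i - 1)) := by
    ext m; exact OptIter_fA_ne i m x
  show sSup {m | OptIter ((BA n).f i) m x ≠ none} = x (i - 1)
  rw [this, csSup_Iic]

end Lemmas
section Tensor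
variable {n : ℕ}

/-- result of `ẽ_i^m`: move `m` from coordinate `i` to coordinate `i-1`. -/
def emA (n : ℕ) (i : Fin (n+1)) (m : ℕ) (x : Fin (n+1) → ℕ) : Fin (n+1) → ℕ :=
  fun j => if j = i then x i - m else if j = i - 1 then x (i - 1) + m else x j

theorem emA_zero (i : Fin (n+1)) (hne : i - 1 ≠ i) (x : Fin (n+1) → ℕ) : emA n i 0 x = x := by
  funext j
  unfold emA
  split_ifs with h1 h2
  · rw [h1]; omega
  · rw [h2]; omega
  · rfl

theorem emA_succ (i : Fin (n+1)) (hne : i - 1 ≠ i) (m : ℕ) (x : Fin (n+1) → ℕ) :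
    emA n i (m + 1) x = emA n i m (eAfun n i x) := by
  funext j
  unfold emA
  split_ifs with h1 h2
  · rw [eAfun_self]; omega
  · rw [eAfun_pred i hne]; omega
  · rw [eAfun_other i j h1 h2]

theorem OptIter_eA_eq (i : Fin (n+1)) (hne : i - 1 ≠ i) (m : ℕ) (x : Fin (n+1) → ℕ)
    (h : m ≤ x i) : OptIter (eA n i) m x = some (emA n i m x) := by
  induction m generalizing x with
  | zero => rw [emA_zero i hne]; rfl
  | succ p ih =>
    rw [OptIter_succ, eA_eq, if_pos (by omega : 0 < x i)]
    show OptIter (eA n i) p (eAfun n i x) = _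
    rw [ih (eAfun n i x) (by rw [eAfun_self]; omega), emA_succ i hne]

/-- explicit formula for the tensor-product raising operator on `B ⊗ B`. -/
theorem tensorE_eq (i : Fin (n+1)) (x w : Fin (n+1) → ℕ) :
    ((BA n).tensor (BA n)).e i (x, w) =
      if w i ≤ x (i - 1) then (eA n i x).map (fun b => (b, w))
      else (eA n i w).map (fun b => (x, b)) := by
  show (if (BA n).eps i w ≤ (BA n).phi i x then _ else _) = _
  rw [eps_BA, phi_BA]
  rfl

theorem OptIter_tE_low (i : Fin (n+1)) (hne : i - 1 ≠ i) (m : ℕ) :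
    ∀ x w : Fin (n+1) → ℕ, x (i - 1) + m ≤ w i →
    OptIter (((BA n).tensor (BA n)).e i) m (x, w) = some (x, emA n i m w) := by
  induction m with
  | zero => intro x w h; rw [emA_zero i hne]; rfl
  | succ p ih =>
    intro x w h
    erw [OptIter_succ]
    rw [tensorE_eq, if_neg (by omega), eA_eq, if_pos (by omega : 0 < w i)]
    show OptIter _ p (x, eAfun n i w) = _
    erw [ih x (eAfun n i w) (by rw [eAfun_self]; omega), emA_succ i hne]

theorem OptIter_tE_high (i : Fin (n+1)) (hne : i - 1 ≠ i) (m : ℕ) :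
    ∀ x w : Fin (n+1) → ℕ, w i ≤ x (i - 1) → m ≤ x i →
    OptIter (((BA n).tensor (BA n)).e i) m (x, w) = some (emA n i m x, w) := by
  induction m with
  | zero => intro x w h1 h2; rw [emA_zero i hne]; rfl
  | succ p ih =>
    intro x w h1 h2
    erw [OptIter_succ]
    rw [tensorE_eq, if_pos h1, eA_eq, if_pos (by omega : 0 < x i)]
    show OptIter _ p (eAfun n i x, w) = _
    erw [ih (eAfun n i x) w (by rw [eAfun_pred i hne]; omega) (by rw [eAfun_self]; omega),
      emA_succ i hne]

theorem OptIter_tE_full (i : Fin (n+1)) (hne : i - 1 ≠ i) (m : ℕ)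
    (x w : Fin (n+1) → ℕ) (h : x (i - 1) ≤ w i) (hm : m ≤ x i) :
    OptIter (((BA n).tensor (BA n)).e i) ((w i - x (i - 1)) + m) (x, w)
      = some (emA n i m x, emA n i (w i - x (i - 1)) w) := by
  erw [OptIter_add]
  rw [OptIter_tE_low i hne (w i - x (i-1)) x w (by omega)]
  show OptIter _ m (x, emA n i (w i - x (i-1)) w) = _
  have hw : emA n i (w i - x (i-1)) w i = x (i - 1) := by
    unfold emA; rw [if_pos rfl]; omega
  exact OptIter_tE_high i hne m x _ (by rw [hw]) hm

theorem OptIter_tE_ne (i : Fin (n+1)) (hne : i - 1 ≠ i) (m : ℕ)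
    (x w : Fin (n+1) → ℕ) (h : x (i - 1) ≤ w i) :
    OptIter (((BA n).tensor (BA n)).e i) m (x, w) ≠ none ↔
      m ≤ (w i - x (i - 1)) + x i := by
  constructor
  · intro hm
    by_contra hc
    push_neg at hc
    have hnone : OptIter (((BA n).tensor (BA n)).e i) ((w i - x (i-1)) + x i + 1) (x, w) = none := by
      erw [OptIter_add]
      rw [OptIter_tE_full i hne (x i) x w h le_rfl]
      show (((BA n).tensor (BA n)).e i _).bind _ = none
      erw [tensorE_eq]
      have hx' : emA n i (x i) x (i - 1) = x (i - 1) + x i := by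
        unfold emA; rw [if_neg hne, if_pos rfl]
      have hw' : emA n i (w i - x (i-1)) w i = x (i - 1) := by
        unfold emA; rw [if_pos rfl]; omega
      rw [if_pos (by rw [hx', hw']; omega), eA_eq]
      have hx0 : emA n i (x i) x i = 0 := by unfold emA; rw [if_pos rfl]; omega
      rw [if_neg (by rw [hx0]; omega)]
      rfl
    exact (fun h0 => h0 hnone) (OptIter_mono _ (by omega) _ hm)
  · intro hm
    have := OptIter_tE_full i hne (x i) x w h le_rfl
    intro h0
    exact (OptIter_mono _ (by omega : m ≤ (w i - x (i-1)) + x i) _ (by rw [this]; exact Option.some_ne_none _)) h0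

theorem eMax_tensor (i : Fin (n+1)) (hne : i - 1 ≠ i)
    (x w : Fin (n+1) → ℕ) (h : x (i - 1) ≤ w i) :
    ((BA n).tensor (BA n)).eMax i (x, w)
      = some (emA n i (x i) x, emA n i (w i - x (i - 1)) w) := by
  have heps : ((BA n).tensor (BA n)).eps i (x, w) = (w i - x (i - 1)) + x i := by
    have hset : {m | OptIter (((BA n).tensor (BA n)).e i) m (x, w) ≠ none}
        = Set.Iic ((w i - x (i - 1)) + x i) := by
      ext m; simpa using OptIter_tE_ne i hne m x w h
    show sSup {m | OptIter (((BA n).tensor (BA n)).e i) m (x, w) ≠ none} = _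
    rw [hset, csSup_Iic]
  show OptIter (((BA n).tensor (BA n)).e i) (((BA n).tensor (BA n)).eps i (x, w)) (x, w) = _
  rw [heps]
  exact OptIter_tE_full i hne (x i) x w h le_rfl

end Tensor
/-- Lemma 3.5 for type `A_n^{(1)}`: there is a constant `C` such that for every
`M ≥ 1` and every `y ⊗ v ∈ B_l ⊗ B_M` with `v_{n+1} ≥ v_b + C` for all `1 ≤ b ≤ n`
(membership in `B_M[a_0]`, `a_0 = n+1`), setting
`y^{(k)} ⊗ v^{(k)} = ẽ^max_{i_k} ⋯ ẽ^max_{i_1}(y ⊗ v)` (`i_k ≡ -k (mod n+1)`),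
one has `t(σ v^{(n)}) = t(y)`, where `σ` is the cyclic shift and
`t(x_1,…,x_{n+1}) = (x_n, …, x_1)`. -/
theorem stmt14 (n l : ℕ) (hn : 1 ≤ n) (hl : 1 ≤ l) :
    ∃ Cst : ℕ, ∀ M : ℕ, 1 ≤ M →
      ∀ y v : Fin (n + 1) → ℕ, ∑ j, y j = l → ∑ j, v j = M →
      (∀ b : Fin (n + 1), (b : ℕ) < n → v b + Cst ≤ v ⟨n, by omega⟩) →
      ∃ p : (Fin (n + 1) → ℕ) × (Fin (n + 1) → ℕ),
        ChainOpt (fun k => ((BA n).tensor (BA n)).eMax (negIdx n k)) n (y, v)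
          = some p ∧
        tA n (shiftA n p.2) = tA n y := by
  refine ⟨l, ?_⟩
  intro M hM y v hy hv hbig
  set g : ℕ → ((Fin (n+1) → ℕ) × (Fin (n+1) → ℕ)) → Option ((Fin (n+1) → ℕ) × (Fin (n+1) → ℕ)) :=
    fun k => ((BA n).tensor (BA n)).eMax (negIdx n k) with hg
  set Y : ℕ → ℕ := fun j => if h : j < n+1 then y ⟨j, h⟩ else 0 with hYdef
  set SY : ℕ → ℕ := fun m => ∑ j ∈ Finset.range m, Y j with hSYdef
  have hYval : ∀ (j : ℕ) (h : j < n + 1), Y j = y ⟨j, h⟩ := by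
    intro j h; simp only [hYdef]; rw [dif_pos h]
  have hSYsucc : ∀ m, SY (m+1) = SY m + Y m := fun m => Finset.sum_range_succ Y m
  have hSYmono : ∀ m m', m ≤ m' → SY m ≤ SY m' := by
    intro m m' h
    exact Finset.sum_le_sum_of_subset (Finset.range_subset_range.mpr h)
  have hSYl : SY (n+1) = l := by
    rw [← hy, hSYdef]
    simp only
    rw [← Fin.sum_univ_eq_sum_range Y (n+1)]
    apply Finset.sum_congr rfl
    intro j _
    rw [hYval j j.isLt]
  have key : ∀ k, k ≤ n → ∃ x w : Fin (n+1) → ℕ,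
      ChainOpt g k (y, v) = some (x, w) ∧
      (∀ j : Fin (n+1), (j : ℕ) < n - k → x j = y j) ∧
      (∀ j : Fin (n+1), (j : ℕ) < n - k → w j = v j) ∧
      (∀ j : Fin (n+1), n - k < (j : ℕ) → w j = Y ((j : ℕ) - 1)) ∧
      (∀ j : Fin (n+1), (j : ℕ) = n - k → SY (n - k) ≤ w j) := by
    intro k
    induction k with
    | zero =>
      intro _
      refine ⟨y, v, rfl, fun j _ => rfl, fun j _ => rfl,
        fun j hj => absurd j.isLt (by omega), ?_⟩
      intro j hj
      have h1 : SY n ≤ l := hSYl ▸ hSYmono n (n+1) (by omega)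
      have h2 := hbig ⟨0, by omega⟩ (by show 0 < n; omega)
      have hj' : j = ⟨n, by omega⟩ := Fin.ext (by show (j : ℕ) = n; omega)
      rw [hj']
      simp only [Nat.sub_zero]
      omega
    | succ k ih =>
      intro hk1
      obtain ⟨x, w, hch, ha, hf, hd, he⟩ := ih (by omega)
      set i : Fin (n+1) := ⟨n - k, by omega⟩ with hi
      have hiv : (i : ℕ) = n - k := rfl
      have hi1 : i - 1 = ⟨n - k - 1, by omega⟩ := finsub1 n (n-k) (by omega) (by omega) hn
      have hi1v : ((i - 1 : Fin (n+1)) : ℕ) = n - k - 1 := by rw [hi1]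
      have hnei : i - 1 ≠ i := Fin.ne_of_val_ne (by rw [hi1v, hiv]; omega)
      have hxI1 : x (i - 1) = Y (n - k - 1) := by
        rw [ha (i - 1) (by rw [hi1v]; omega), hi1, ← hYval (n - k - 1) (by omega)]
      have hSYstep : SY (n - k) = SY (n - k - 1) + Y (n - k - 1) := by
        have h0 : n - k = (n - k - 1) + 1 := by omega
        conv_lhs => rw [h0]
        rw [hSYsucc]
      have hei : SY (n - k) ≤ w i := he i hiv
      have hcond : x (i - 1) ≤ w i := by
        rw [hxI1]
        omega
      have hgk : negIdx n ((k : ℕ) + 1 : ℕ) = i := by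
        rw [negIdx_eq n (k+1) (by omega) (by omega)]
        exact Fin.ext (by show n + 1 - (k + 1) = (i : ℕ); rw [hiv]; omega)
      have hstep : g (k + 1) (x, w)
          = some (emA n i (x i) x, emA n i (w i - x (i - 1)) w) := by
        show ((BA n).tensor (BA n)).eMax (negIdx n ((k : ℕ) + 1 : ℕ)) (x, w) = _
        rw [hgk]
        exact eMax_tensor i hnei x w hcond
      refine ⟨emA n i (x i) x, emA n i (w i - x (i - 1)) w, ?_, ?_, ?_, ?_, ?_⟩
      · rw [ChainOpt_succ, hch, Option.bind_some, hstep]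
      · intro j hj
        unfold emA
        rw [if_neg (Fin.ne_of_val_ne (by rw [hiv]; omega)),
          if_neg (Fin.ne_of_val_ne (by rw [hi1v]; omega))]
        exact ha j (by omega)
      · intro j hj
        unfold emA
        rw [if_neg (Fin.ne_of_val_ne (by rw [hiv]; omega)),
          if_neg (Fin.ne_of_val_ne (by rw [hi1v]; omega))]
        exact hf j (by omega)
      · intro j hj
        unfold emA
        by_cases hji : j = i
        · rw [if_pos hji, hji, hiv]
          rw [hxI1] at hcond ⊢
          omega
        · have hjne : (j : ℕ) ≠ n - k := fun hc => hji (Fin.ext (by rw [hiv]; omega))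
          have hjgt : n - k < (j : ℕ) := by omega
          rw [if_neg hji, if_neg (Fin.ne_of_val_ne (by rw [hi1v]; omega))]
          exact hd j (by omega)
      · intro j hj
        unfold emA
        have hji1 : j = i - 1 := Fin.ext (by rw [hi1v]; omega)
        rw [if_neg (Fin.ne_of_val_ne (by rw [hiv]; omega)), if_pos hji1]
        have h3 : n - (k + 1) = n - k - 1 := by omega
        rw [h3]
        rw [hxI1] at hcond ⊢
        omega
  obtain ⟨x, w, hch, _, _, hd, _⟩ := key n le_rfl
  refine ⟨(x, w), hch, ?_⟩
  funext m
  show w ((⟨n - 1 - (m : ℕ), by omega⟩ : Fin (n+1)) + 1) = y ⟨n - 1 - (m : ℕ), by omega⟩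
  have hadd : ((⟨n - 1 - (m : ℕ), by omega⟩ : Fin (n+1)) + 1 : Fin (n+1))
      = ⟨n - 1 - (m : ℕ) + 1, by omega⟩ := finadd1 n (n - 1 - (m : ℕ)) hn (by omega)
  rw [hadd, hd ⟨n - 1 - (m : ℕ) + 1, by omega⟩ (by show n - n < n - 1 - (m : ℕ) + 1; omega)]
  simp only [Nat.add_sub_cancel]
  exact hYval (n - 1 - (m : ℕ)) (by omega)
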